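/- arXiv:1905.06366 — 2 statements merged into one kernel-verified Lean document; each statement's English description precedes it below -/
import Mathlib

section
/- Let A be an m×n real matrix with full column rank and let 𝐀 ∈ ℝ^{2m×n} be the vertical concatenation of A and −A. Then χ(𝐀) = χ(A), where χ(X) := sup over positive diagonal D (of appropriate size) of ‖(XᵀDX)⁻¹XᵀD‖. -/
noncomputable def opNorm {ι κ : Type*} [Fintype ι] [Fintype κ] [DecidableEq κ]
    (A : Matrix ι κ ℝ) : ℝ :=
  ‖LinearMap.toContinuousLinearMap (Matrix.toEuclideanLin A)‖

/-- `χ(X) := sup_{D positive diagonal} ‖(XᵀDX)⁻¹XᵀD‖`, for any finite row index type. -/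
noncomputable def chi {ι : Type*} [Fintype ι] [DecidableEq ι] {n : ℕ}
    (A : Matrix ι (Fin n) ℝ) : ℝ :=
  sSup {c : ℝ | ∃ d : ι → ℝ, (∀ i, 0 < d i) ∧
    c = opNorm ((A.transpose * Matrix.diagonal d * A)⁻¹ * A.transpose * Matrix.diagonal d)}



open Matrix in
theorem _check : True := trivial

namespace Stmt15Aux
open Matrix

lemma smul_inv_real {n : ℕ} (k : ℝ) (hk : k ≠ 0) (P : Matrix (Fin n) (Fin n) ℝ) :
    (k • P)⁻¹ = k⁻¹ • P⁻¹ := by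
  by_cases h : IsUnit P.det
  · have := Matrix.inv_smul' (Units.mk0 k hk) (A := P) h
    simpa [Units.smul_def] using this
  · have h2 : ¬ IsUnit ((k • P).det) := by
      rw [Matrix.det_smul]
      have hdet : P.det = 0 := by
        by_contra hne
        exact h (isUnit_iff_ne_zero.mpr hne)
      rw [hdet, mul_zero]
      simp
    rw [Matrix.nonsing_inv_apply_not_isUnit _ h2, Matrix.nonsing_inv_apply_not_isUnit _ h,
      smul_zero]

variable {m n : ℕ}

lemma trans_diag (A : Matrix (Fin m) (Fin n) ℝ) (d : Fin m ⊕ Fin m → ℝ) :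
    (Matrix.fromRows A (-A))ᵀ * Matrix.diagonal d =
      Matrix.fromCols (Aᵀ * Matrix.diagonal (fun i => d (Sum.inl i)))
        ((-Aᵀ) * Matrix.diagonal (fun i => d (Sum.inr i))) := by
  ext j i
  cases i <;>
    simp [Matrix.mul_diagonal, Matrix.fromCols_apply_inl, Matrix.fromCols_apply_inr,
      Matrix.fromRows_apply_inl, Matrix.fromRows_apply_inr]

lemma trans_diag_mul (A : Matrix (Fin m) (Fin n) ℝ) (d : Fin m ⊕ Fin m → ℝ) :
    (Matrix.fromRows A (-A))ᵀ * Matrix.diagonal d * (Matrix.fromRows A (-A)) =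
      Aᵀ * Matrix.diagonal (fun i => d (Sum.inl i) + d (Sum.inr i)) * A := by
  rw [trans_diag, Matrix.fromCols_mul_fromRows, ← Matrix.diagonal_add,
    Matrix.mul_add, Matrix.add_mul]
  simp only [Matrix.neg_mul, Matrix.mul_neg, neg_neg]

lemma trans_diag_mulVec (A : Matrix (Fin m) (Fin n) ℝ) (d : Fin m ⊕ Fin m → ℝ)
    (hd : ∀ i, 0 < d i) (x : Fin m ⊕ Fin m → ℝ) :
    ((Matrix.fromRows A (-A))ᵀ * Matrix.diagonal d) *ᵥ x =
      (Aᵀ * Matrix.diagonal (fun i => d (Sum.inl i) + d (Sum.inr i))) *ᵥ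
        (fun i => (d (Sum.inl i) * x (Sum.inl i) - d (Sum.inr i) * x (Sum.inr i)) /
          (d (Sum.inl i) + d (Sum.inr i))) := by
  have hx : x = Sum.elim (x ∘ Sum.inl) (x ∘ Sum.inr) := by ext i; cases i <;> rfl
  rw [trans_diag]
  conv_lhs => rw [hx]
  rw [Matrix.fromCols_mulVec_sumElim]
  rw [(Matrix.mulVec_mulVec (x ∘ Sum.inl) Aᵀ (Matrix.diagonal fun i => d (Sum.inl i))).symm]
  rw [(Matrix.mulVec_mulVec (x ∘ Sum.inr) (-Aᵀ) (Matrix.diagonal fun i => d (Sum.inr i))).symm]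
  rw [(Matrix.mulVec_mulVec (fun i => (d (Sum.inl i) * x (Sum.inl i) - d (Sum.inr i) * x (Sum.inr i)) /
        (d (Sum.inl i) + d (Sum.inr i))) Aᵀ
      (Matrix.diagonal fun i => d (Sum.inl i) + d (Sum.inr i))).symm]
  rw [Matrix.neg_mulVec, ← sub_eq_add_neg, ← Matrix.mulVec_sub]
  refine congrArg (fun w => Aᵀ *ᵥ w) ?_
  ext i
  have hpos : 0 < d (Sum.inl i) + d (Sum.inr i) := add_pos (hd _) (hd _)
  simp only [Matrix.mulVec_diagonal, Pi.sub_apply, Function.comp_apply]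
  field_simp

end Stmt15Aux

namespace Stmt15Aux2
open Stmt15Aux Matrix

variable {m n : ℕ}

lemma claim1 (A : Matrix (Fin m) (Fin n) ℝ) (d : Fin m ⊕ Fin m → ℝ) (hd : ∀ i, 0 < d i) :
    opNorm (((Matrix.fromRows A (-A))ᵀ * Matrix.diagonal d * Matrix.fromRows A (-A))⁻¹ *
        (Matrix.fromRows A (-A))ᵀ * Matrix.diagonal d) ≤
      opNorm ((Aᵀ * Matrix.diagonal (fun i => d (Sum.inl i) + d (Sum.inr i)) * A)⁻¹ *
        Aᵀ * Matrix.diagonal (fun i => d (Sum.inl i) + d (Sum.inr i))) := by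
  unfold opNorm
  apply ContinuousLinearMap.opNorm_le_bound _ (norm_nonneg _)
  intro x
  set xf : Fin m ⊕ Fin m → ℝ := WithLp.equiv 2 _ x with hxf
  set z : Fin m → ℝ := fun i =>
    (d (Sum.inl i) * xf (Sum.inl i) - d (Sum.inr i) * xf (Sum.inr i)) /
      (d (Sum.inl i) + d (Sum.inr i)) with hz
  set z' : EuclideanSpace ℝ (Fin m) := (WithLp.equiv 2 _).symm z with hz'
  have hmv : (((Matrix.fromRows A (-A))ᵀ * Matrix.diagonal d * Matrix.fromRows A (-A))⁻¹ *
        (Matrix.fromRows A (-A))ᵀ * Matrix.diagonal d) *ᵥ xf =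
      ((Aᵀ * Matrix.diagonal (fun i => d (Sum.inl i) + d (Sum.inr i)) * A)⁻¹ *
        Aᵀ * Matrix.diagonal (fun i => d (Sum.inl i) + d (Sum.inr i))) *ᵥ z := by
    calc (((Matrix.fromRows A (-A))ᵀ * Matrix.diagonal d * Matrix.fromRows A (-A))⁻¹ *
          (Matrix.fromRows A (-A))ᵀ * Matrix.diagonal d) *ᵥ xf
        = ((Matrix.fromRows A (-A))ᵀ * Matrix.diagonal d * Matrix.fromRows A (-A))⁻¹ *ᵥ
            (((Matrix.fromRows A (-A))ᵀ * Matrix.diagonal d) *ᵥ xf) := by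
          rw [Matrix.mulVec_mulVec, ← Matrix.mul_assoc]
      _ = ((Matrix.fromRows A (-A))ᵀ * Matrix.diagonal d * Matrix.fromRows A (-A))⁻¹ *ᵥ
            ((Aᵀ * Matrix.diagonal (fun i => d (Sum.inl i) + d (Sum.inr i))) *ᵥ z) := by
          rw [trans_diag_mulVec A d hd xf]
      _ = (((Matrix.fromRows A (-A))ᵀ * Matrix.diagonal d * Matrix.fromRows A (-A))⁻¹ *
            (Aᵀ * Matrix.diagonal (fun i => d (Sum.inl i) + d (Sum.inr i)))) *ᵥ z := by
          rw [Matrix.mulVec_mulVec]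
      _ = ((Aᵀ * Matrix.diagonal (fun i => d (Sum.inl i) + d (Sum.inr i)) * A)⁻¹ *
            Aᵀ * Matrix.diagonal (fun i => d (Sum.inl i) + d (Sum.inr i))) *ᵥ z := by
          rw [trans_diag_mul]
          rw [Matrix.mul_assoc ((Aᵀ * Matrix.diagonal (fun i => d (Sum.inl i) + d (Sum.inr i)) * A)⁻¹)
            Aᵀ (Matrix.diagonal (fun i => d (Sum.inl i) + d (Sum.inr i)))]
  have happ : (LinearMap.toContinuousLinearMap (Matrix.toEuclideanLin
        (((Matrix.fromRows A (-A))ᵀ * Matrix.diagonal d * Matrix.fromRows A (-A))⁻¹ *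
          (Matrix.fromRows A (-A))ᵀ * Matrix.diagonal d))) x =
      (LinearMap.toContinuousLinearMap (Matrix.toEuclideanLin
        ((Aᵀ * Matrix.diagonal (fun i => d (Sum.inl i) + d (Sum.inr i)) * A)⁻¹ *
          Aᵀ * Matrix.diagonal (fun i => d (Sum.inl i) + d (Sum.inr i))))) z' := by
    simp only [LinearMap.coe_toContinuousLinearMap', Matrix.toEuclideanLin_apply]
    refine congrArg _ ?_
    rw [hz']
    exact hmv
  have hznorm : ‖z'‖ ≤ ‖x‖ := by
    rw [EuclideanSpace.norm_eq, EuclideanSpace.norm_eq]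
    apply Real.sqrt_le_sqrt
    rw [Fintype.sum_sum_type, ← Finset.sum_add_distrib]
    apply Finset.sum_le_sum
    intro i _
    have h1 := hd (Sum.inl i)
    have h2 := hd (Sum.inr i)
    have hz'i : z' i = z i := rfl
    have hx1 : x (Sum.inl i) = xf (Sum.inl i) := rfl
    have hx2 : x (Sum.inr i) = xf (Sum.inr i) := rfl
    rw [hz'i, hx1, hx2, Real.norm_eq_abs, Real.norm_eq_abs, Real.norm_eq_abs, sq_abs, sq_abs,
      sq_abs, hz, div_pow, div_le_iff₀ (by positivity)]
    nlinarith [mul_pos h1 h2, sq_nonneg (xf (Sum.inl i) + xf (Sum.inr i)),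
      sq_nonneg (d (Sum.inr i) * xf (Sum.inl i) + d (Sum.inl i) * xf (Sum.inr i)),
      sq_nonneg (xf (Sum.inl i)), sq_nonneg (xf (Sum.inr i))]
  calc ‖(LinearMap.toContinuousLinearMap (Matrix.toEuclideanLin
          (((Matrix.fromRows A (-A))ᵀ * Matrix.diagonal d * Matrix.fromRows A (-A))⁻¹ *
            (Matrix.fromRows A (-A))ᵀ * Matrix.diagonal d))) x‖
      = ‖(LinearMap.toContinuousLinearMap (Matrix.toEuclideanLin
          ((Aᵀ * Matrix.diagonal (fun i => d (Sum.inl i) + d (Sum.inr i)) * A)⁻¹ *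
            Aᵀ * Matrix.diagonal (fun i => d (Sum.inl i) + d (Sum.inr i))))) z'‖ := by
        rw [happ]
    _ ≤ ‖LinearMap.toContinuousLinearMap (Matrix.toEuclideanLin
          ((Aᵀ * Matrix.diagonal (fun i => d (Sum.inl i) + d (Sum.inr i)) * A)⁻¹ *
            Aᵀ * Matrix.diagonal (fun i => d (Sum.inl i) + d (Sum.inr i))))‖ * ‖z'‖ :=
        ContinuousLinearMap.le_opNorm _ _
    _ ≤ ‖LinearMap.toContinuousLinearMap (Matrix.toEuclideanLin
          ((Aᵀ * Matrix.diagonal (fun i => d (Sum.inl i) + d (Sum.inr i)) * A)⁻¹ *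
            Aᵀ * Matrix.diagonal (fun i => d (Sum.inl i) + d (Sum.inr i))))‖ * ‖x‖ := by
        gcongr

end Stmt15Aux2

namespace Stmt15Aux2
open Stmt15Aux Matrix

variable {m n : ℕ}

lemma claim2 (A : Matrix (Fin m) (Fin n) ℝ) (d : Fin m → ℝ) (ε : ℝ) (hε : 0 < ε) :
    opNorm ((Aᵀ * Matrix.diagonal d * A)⁻¹ * Aᵀ * Matrix.diagonal d) ≤
      (1 + ε) * opNorm (((Matrix.fromRows A (-A))ᵀ *
          Matrix.diagonal (Sum.elim d fun i => ε * d i) * Matrix.fromRows A (-A))⁻¹ *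
        (Matrix.fromRows A (-A))ᵀ * Matrix.diagonal (Sum.elim d fun i => ε * d i)) := by
  have h1ε : (0:ℝ) < 1 + ε := by linarith
  unfold opNorm
  apply ContinuousLinearMap.opNorm_le_bound _ (by positivity)
  intro v
  set vf : Fin m → ℝ := WithLp.equiv 2 _ v with hvf
  set w : Fin m ⊕ Fin m → ℝ := Sum.elim vf 0 with hw
  set w' : EuclideanSpace ℝ (Fin m ⊕ Fin m) := (WithLp.equiv 2 _).symm w with hw'
  have hN : (Matrix.fromRows A (-A))ᵀ * Matrix.diagonal (Sum.elim d fun i => ε * d i) *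
      Matrix.fromRows A (-A) = (1 + ε) • (Aᵀ * Matrix.diagonal d * A) := by
    rw [trans_diag_mul]
    have h2 : (fun i => Sum.elim d (fun i => ε * d i) (Sum.inl i) +
        Sum.elim d (fun i => ε * d i) (Sum.inr i)) = fun i => (1 + ε) * d i := by
      funext i; simp; ring
    have h3 : Matrix.diagonal (fun i => (1 + ε) * d i) = (1 + ε) • Matrix.diagonal d := by
      ext i j
      rcases eq_or_ne i j with h | h <;>
        simp [Matrix.diagonal_apply, Matrix.smul_apply, h]
    rw [h2, h3, Matrix.mul_smul, Matrix.smul_mul]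
  have hCol : ((Matrix.fromRows A (-A))ᵀ * Matrix.diagonal (Sum.elim d fun i => ε * d i)) *ᵥ w =
      (Aᵀ * Matrix.diagonal d) *ᵥ vf := by
    rw [trans_diag, hw, Matrix.fromCols_mulVec_sumElim]
    simp [Matrix.mulVec_zero]
  have hmv : ((Aᵀ * Matrix.diagonal d * A)⁻¹ * Aᵀ * Matrix.diagonal d) *ᵥ vf =
      (1 + ε) • ((((Matrix.fromRows A (-A))ᵀ *
          Matrix.diagonal (Sum.elim d fun i => ε * d i) * Matrix.fromRows A (-A))⁻¹ *
        (Matrix.fromRows A (-A))ᵀ * Matrix.diagonal (Sum.elim d fun i => ε * d i)) *ᵥ w) := by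
    have e1 : (((Matrix.fromRows A (-A))ᵀ *
          Matrix.diagonal (Sum.elim d fun i => ε * d i) * Matrix.fromRows A (-A))⁻¹ *
        (Matrix.fromRows A (-A))ᵀ * Matrix.diagonal (Sum.elim d fun i => ε * d i)) *ᵥ w =
        ((Matrix.fromRows A (-A))ᵀ *
          Matrix.diagonal (Sum.elim d fun i => ε * d i) * Matrix.fromRows A (-A))⁻¹ *ᵥ
          (((Matrix.fromRows A (-A))ᵀ * Matrix.diagonal (Sum.elim d fun i => ε * d i)) *ᵥ w) := by
      rw [Matrix.mulVec_mulVec, ← Matrix.mul_assoc]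
    rw [e1, hCol, hN, smul_inv_real (1 + ε) (ne_of_gt h1ε), Matrix.smul_mulVec,
      smul_smul, mul_inv_cancel₀ (ne_of_gt h1ε), one_smul, Matrix.mulVec_mulVec,
      ← Matrix.mul_assoc]
  have hwnorm : ‖w'‖ = ‖v‖ := by
    rw [EuclideanSpace.norm_eq, EuclideanSpace.norm_eq]
    congr 1
    rw [Fintype.sum_sum_type]
    have hl : ∀ i : Fin m, w' (Sum.inl i) = vf i := fun i => rfl
    have hr : ∀ i : Fin m, w' (Sum.inr i) = 0 := fun i => rfl
    have hv : ∀ i : Fin m, (v : EuclideanSpace ℝ (Fin m)) i = vf i := fun i => rfl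
    simp [hl, hr, hv]
  have happ : (LinearMap.toContinuousLinearMap (Matrix.toEuclideanLin
        ((Aᵀ * Matrix.diagonal d * A)⁻¹ * Aᵀ * Matrix.diagonal d))) v =
      (1 + ε) • (LinearMap.toContinuousLinearMap (Matrix.toEuclideanLin
        (((Matrix.fromRows A (-A))ᵀ * Matrix.diagonal (Sum.elim d fun i => ε * d i) *
            Matrix.fromRows A (-A))⁻¹ *
          (Matrix.fromRows A (-A))ᵀ * Matrix.diagonal (Sum.elim d fun i => ε * d i)))) w' := by
    simp only [LinearMap.coe_toContinuousLinearMap', Matrix.toEuclideanLin_apply]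
    rw [hw', ← WithLp.toLp_smul]
    exact congrArg _ hmv
  rw [happ, norm_smul, Real.norm_eq_abs, abs_of_pos h1ε]
  calc (1 + ε) * ‖(LinearMap.toContinuousLinearMap (Matrix.toEuclideanLin
        (((Matrix.fromRows A (-A))ᵀ * Matrix.diagonal (Sum.elim d fun i => ε * d i) *
            Matrix.fromRows A (-A))⁻¹ *
          (Matrix.fromRows A (-A))ᵀ * Matrix.diagonal (Sum.elim d fun i => ε * d i)))) w'‖
      ≤ (1 + ε) * (‖LinearMap.toContinuousLinearMap (Matrix.toEuclideanLin
        (((Matrix.fromRows A (-A))ᵀ * Matrix.diagonal (Sum.elim d fun i => ε * d i) *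
            Matrix.fromRows A (-A))⁻¹ *
          (Matrix.fromRows A (-A))ᵀ * Matrix.diagonal (Sum.elim d fun i => ε * d i)))‖ * ‖w'‖) := by
        gcongr
        exact ContinuousLinearMap.le_opNorm _ _
    _ = (1 + ε) * ‖LinearMap.toContinuousLinearMap (Matrix.toEuclideanLin
        (((Matrix.fromRows A (-A))ᵀ * Matrix.diagonal (Sum.elim d fun i => ε * d i) *
            Matrix.fromRows A (-A))⁻¹ *
          (Matrix.fromRows A (-A))ᵀ * Matrix.diagonal (Sum.elim d fun i => ε * d i)))‖ * ‖v‖ := by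
        rw [hwnorm]; ring

end Stmt15Aux2

theorem stmt15 {m n : ℕ} (A : Matrix (Fin m) (Fin n) ℝ)
    (hA : LinearIndependent ℝ (fun j : Fin n => fun i : Fin m => A i j)) :
    chi (Matrix.fromRows A (-A)) = chi A := by
  classical
  set T : Set ℝ := {c : ℝ | ∃ d : Fin m ⊕ Fin m → ℝ, (∀ i, 0 < d i) ∧
    c = opNorm (((Matrix.fromRows A (-A)).transpose * Matrix.diagonal d * Matrix.fromRows A (-A))⁻¹ *
      (Matrix.fromRows A (-A)).transpose * Matrix.diagonal d)} with hTdef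
  set S : Set ℝ := {c : ℝ | ∃ d : Fin m → ℝ, (∀ i, 0 < d i) ∧
    c = opNorm ((A.transpose * Matrix.diagonal d * A)⁻¹ * A.transpose * Matrix.diagonal d)} with hSdef
  have hchiT : chi (Matrix.fromRows A (-A)) = sSup T := rfl
  have hchiA : chi A = sSup S := rfl
  have hTne : T.Nonempty := ⟨_, ⟨fun _ => (1:ℝ), fun _ => one_pos, rfl⟩⟩
  have hSne : S.Nonempty := ⟨_, ⟨fun _ => (1:ℝ), fun _ => one_pos, rfl⟩⟩
  have hTnonneg : ∀ t ∈ T, 0 ≤ t := by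
    rintro t ⟨d, hd, rfl⟩
    exact norm_nonneg _
  have key1 : ∀ t ∈ T, ∃ s ∈ S, t ≤ s := by
    rintro t ⟨d, hd, rfl⟩
    exact ⟨_, ⟨fun i => d (Sum.inl i) + d (Sum.inr i), fun i => add_pos (hd _) (hd _), rfl⟩,
      Stmt15Aux2.claim1 A d hd⟩
  have key2 : ∀ s ∈ S, ∀ ε : ℝ, 0 < ε → ∃ t ∈ T, s ≤ (1 + ε) * t := by
    rintro s ⟨d, hd, rfl⟩ ε hε
    refine ⟨_, ⟨Sum.elim d (fun i => ε * d i), ?_, rfl⟩, Stmt15Aux2.claim2 A d ε hε⟩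
    intro i
    cases i with
    | inl i => exact hd i
    | inr i => exact mul_pos hε (hd i)
  by_cases hb : BddAbove S
  · have hbT : BddAbove T := by
      refine ⟨sSup S, fun t ht => ?_⟩
      obtain ⟨s, hs, hts⟩ := key1 t ht
      exact hts.trans (le_csSup hb hs)
    rw [hchiT, hchiA]
    apply le_antisymm
    · apply csSup_le hTne
      intro t ht
      obtain ⟨s, hs, hts⟩ := key1 t ht
      exact hts.trans (le_csSup hb hs)
    · apply csSup_le hSne
      intro s hs
      have hsupT0 : 0 ≤ sSup T := by
        obtain ⟨t, ht⟩ := hTne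
        exact (hTnonneg t ht).trans (le_csSup hbT ht)
      apply le_of_forall_pos_le_add
      intro δ hδ
      have hεpos : 0 < δ / (sSup T + 1) := by positivity
      obtain ⟨t, ht, hst⟩ := key2 s hs _ hεpos
      have htle : t ≤ sSup T := le_csSup hbT ht
      have h0t : 0 ≤ t := hTnonneg t ht
      have h1 : (1 + δ / (sSup T + 1)) * t ≤ (1 + δ / (sSup T + 1)) * sSup T := by
        apply mul_le_mul_of_nonneg_left htle
        positivity
      have h2 : δ / (sSup T + 1) * sSup T ≤ δ := by
        rw [div_mul_eq_mul_div, div_le_iff₀ (by positivity)]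
        nlinarith
      nlinarith
  · have hbT : ¬ BddAbove T := by
      rintro ⟨b, hbnd⟩
      apply hb
      refine ⟨(1 + 1) * b, fun s hs => ?_⟩
      obtain ⟨t, ht, hst⟩ := key2 s hs 1 one_pos
      have htb : t ≤ b := hbnd ht
      nlinarith [hTnonneg t ht]
    rw [hchiT, hchiA, Real.sSup_of_not_bddAbove hbT, Real.sSup_of_not_bddAbove hb]
end

section
/- Let A be an m×n real matrix with full column rank, S a signature matrix, and J ⊆ [m] with A_J invertible. If v̂ ∈ ℝ^J attains max{‖v‖ : ‖A_Jᵀv‖ = 1} and S is chosen with S_{ii} = sign(v̂ᵢ) for i ∈ J, then u := S_J v̂ satisfies u ≥ 0, ‖(S_J A_J)ᵀ u‖ = 1, and ‖u‖ = ‖A_J⁻¹‖. Consequently max{‖w‖ : w ∈ ℝ^J₊, ‖(S_J A_J)ᵀ w‖ = 1} ≥ ‖A_J⁻¹‖. -/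
noncomputable def evnorm {ι : Type*} [Fintype ι] (v : ι → ℝ) : ℝ :=
  ‖(WithLp.equiv 2 (ι → ℝ)).symm v‖

lemma evnorm_mulVec_le {ι κ : Type*} [Fintype ι] [Fintype κ] [DecidableEq κ]
    (M : Matrix ι κ ℝ) (x : κ → ℝ) :
    evnorm (M.mulVec x) ≤ opNorm M * evnorm x := by
  have h := (LinearMap.toContinuousLinearMap (Matrix.toEuclideanLin M)).le_opNorm
    ((WithLp.equiv 2 (κ → ℝ)).symm x)
  simpa [evnorm, opNorm, Matrix.toEuclideanLin_apply_piLp_toLp] using h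

lemma opNorm_transpose {ι κ : Type*} [Fintype ι] [Fintype κ] [DecidableEq ι] [DecidableEq κ]
    (M : Matrix ι κ ℝ) : opNorm M.transpose = opNorm M := by
  have h : M.transpose = M.conjTranspose := by
    ext i j; simp [Matrix.conjTranspose_apply]
  rw [opNorm, h, Matrix.toEuclideanLin_conjTranspose_eq_adjoint,
    LinearMap.adjoint_toContinuousLinearMap]
  exact LinearIsometryEquiv.norm_map ContinuousLinearMap.adjoint _

lemma evnorm_congr_abs {ι : Type*} [Fintype ι] {x y : ι → ℝ} (h : ∀ i, |x i| = |y i|) :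
    evnorm x = evnorm y := by
  simp only [evnorm, EuclideanSpace.norm_eq]
  congr 1
  refine Finset.sum_congr rfl fun i _ => ?_
  have hx : ((WithLp.equiv 2 (ι → ℝ)).symm x) i = x i := rfl
  have hy : ((WithLp.equiv 2 (ι → ℝ)).symm y) i = y i := rfl
  rw [hx, hy, Real.norm_eq_abs, Real.norm_eq_abs, h i]

theorem stmt16 {m n : ℕ} (A : Matrix (Fin m) (Fin n) ℝ)
    (hA : LinearIndependent ℝ (fun j : Fin n => fun i : Fin m => A i j))
    (r : Fin n → Fin m) (hr : Function.Injective r)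
    (B : Matrix (Fin n) (Fin n) ℝ) (hB : B = A.submatrix r id) (hBunit : IsUnit B)
    (vhat : Fin n → ℝ) (hv1 : evnorm (B.transpose.mulVec vhat) = 1)
    (hvmax : ∀ v : Fin n → ℝ, evnorm (B.transpose.mulVec v) = 1 → evnorm v ≤ evnorm vhat)
    (s : Fin m → ℝ) (hs : ∀ i, s i = 1 ∨ s i = -1)
    (hsign : ∀ i : Fin n, s (r i) = if 0 ≤ vhat i then 1 else -1)
    (u : Fin n → ℝ) (hu : u = fun i => s (r i) * vhat i) :
    (∀ i, 0 ≤ u i) ∧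
    evnorm ((Matrix.diagonal (fun i => s (r i)) * B).transpose.mulVec u) = 1 ∧
    evnorm u = opNorm B⁻¹ ∧
    opNorm B⁻¹ ≤ sSup {c : ℝ | ∃ w : Fin n → ℝ, (∀ i, 0 ≤ w i) ∧
      evnorm ((Matrix.diagonal (fun i => s (r i)) * B).transpose.mulVec w) = 1 ∧
      c = evnorm w} := by
  have hs2 : ∀ i : Fin n, s (r i) * s (r i) = 1 := fun i => by
    rcases hs (r i) with h | h <;> rw [h] <;> norm_num
  have habs : ∀ i : Fin n, |s (r i)| = 1 := fun i => by
    rcases hs (r i) with h | h <;> rw [h] <;> norm_num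
  -- rewriting the diagonal-product mulVec
  have hDu : ∀ w : Fin n → ℝ,
      (Matrix.diagonal (fun i => s (r i)) * B).transpose.mulVec w
        = B.transpose.mulVec (fun i => s (r i) * w i) := by
    intro w
    have hd : (Matrix.diagonal (fun i => s (r i))).mulVec w = fun i => s (r i) * w i := by
      funext i; exact Matrix.mulVec_diagonal _ _ _
    rw [Matrix.transpose_mul, Matrix.diagonal_transpose, ← Matrix.mulVec_mulVec, hd]
  -- part 1 : nonnegativity
  have h1 : ∀ i, 0 ≤ u i := by
    intro i
    rw [hu]
    by_cases h : 0 ≤ vhat i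
    · have := hsign i
      rw [if_pos h] at this
      simp [this, h]
    · have hsi := hsign i
      rw [if_neg h] at hsi
      dsimp only
      rw [hsi]
      nlinarith [lt_of_not_ge h]
  -- the key cancellation : s(r i) * u i = vhat i
  have hsu : (fun i => s (r i) * u i) = vhat := by
    funext i
    rw [hu]
    dsimp only
    rw [← mul_assoc, hs2 i, one_mul]
  -- part 2
  have h2 : evnorm ((Matrix.diagonal (fun i => s (r i)) * B).transpose.mulVec u) = 1 := by
    rw [hDu, hsu]; exact hv1
  -- |u i| = |vhat i|
  have huabs : ∀ i, |u i| = |vhat i| := by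
    intro i
    rw [hu]
    dsimp only
    rw [abs_mul, habs i, one_mul]
  have huv : evnorm u = evnorm vhat := evnorm_congr_abs huabs
  -- invertibility facts
  have hdet : IsUnit B.det := (Matrix.isUnit_iff_isUnit_det B).mp hBunit
  have hdetT : IsUnit B.transpose.det := by rwa [Matrix.det_transpose]
  have hMB : B.transpose⁻¹ * B.transpose = 1 := Matrix.nonsing_inv_mul _ hdetT
  have hBM : B.transpose * B.transpose⁻¹ = 1 := Matrix.mul_nonsing_inv _ hdetT
  -- opNorm B⁻¹ = opNorm (Bᵀ)⁻¹
  have hop : opNorm B⁻¹ = opNorm B.transpose⁻¹ := by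
    rw [← Matrix.transpose_nonsing_inv, opNorm_transpose]
  -- evnorm vhat = opNorm B⁻¹
  have h3 : evnorm vhat = opNorm B⁻¹ := by
    rw [hop]
    refine le_antisymm ?_ ?_
    · have hvhat : vhat = B.transpose⁻¹.mulVec (B.transpose.mulVec vhat) := by
        rw [Matrix.mulVec_mulVec, hMB, Matrix.one_mulVec]
      calc evnorm vhat = evnorm (B.transpose⁻¹.mulVec (B.transpose.mulVec vhat)) := by
              rw [← hvhat]
        _ ≤ opNorm B.transpose⁻¹ * evnorm (B.transpose.mulVec vhat) := evnorm_mulVec_le _ _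
        _ = opNorm B.transpose⁻¹ := by rw [hv1, mul_one]
    · rw [opNorm]
      refine ContinuousLinearMap.opNorm_le_of_unit_norm (norm_nonneg _) fun x hx => ?_
      set x' : Fin n → ℝ := WithLp.equiv 2 (Fin n → ℝ) x with hx'
      set v : Fin n → ℝ := B.transpose⁻¹.mulVec x' with hv
      have hBv : B.transpose.mulVec v = x' := by
        rw [hv, Matrix.mulVec_mulVec, hBM, Matrix.one_mulVec]
      have hx1 : evnorm x' = 1 := by
        rw [evnorm, hx']
        simpa using hx
      have hle : evnorm v ≤ evnorm vhat := hvmax v (by rw [hBv]; exact hx1)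
      have happ : ‖LinearMap.toContinuousLinearMap (Matrix.toEuclideanLin B.transpose⁻¹) x‖
          = evnorm v := by
        rw [evnorm, hv]
        congr 1
      rw [happ]
      exact hle
  -- part 4
  set Q : Set ℝ := {c : ℝ | ∃ w : Fin n → ℝ, (∀ i, 0 ≤ w i) ∧
      evnorm ((Matrix.diagonal (fun i => s (r i)) * B).transpose.mulVec w) = 1 ∧
      c = evnorm w} with hQ
  have hmem : evnorm u ∈ Q := ⟨u, h1, h2, rfl⟩
  have hbdd : BddAbove Q := by
    refine ⟨evnorm vhat, fun c hc => ?_⟩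
    obtain ⟨w, hw0, hw1, rfl⟩ := hc
    rw [hDu] at hw1
    have hle := hvmax _ hw1
    have : evnorm w = evnorm (fun i => s (r i) * w i) := by
      refine evnorm_congr_abs fun i => ?_
      rw [abs_mul, habs i, one_mul]
    rw [this]
    exact hle
  have h4 : opNorm B⁻¹ ≤ sSup Q := by
    rw [← h3, ← huv]
    exact le_csSup hbdd hmem
  exact ⟨h1, h2, huv.trans h3, h4⟩
end
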